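/- Let λ(s) = (1-s)λ + sμ·𝟙 for s ∈ [0,1], where λ ∈ Γ_m, μ > 0, and 𝟙 = (1,...,1). Then S_m(λ(s)) = Σ_{p=0}^{m} binomial(n-p, m-p) (1-s)^p (μs)^{m-p} S_p(λ) > 0 for all s ∈ [0,1]; in particular λ(s) ∈ Γ_m for all s ∈ [0,1]. -/

import Mathlib

/-- The `m`-th elementary symmetric polynomial of `l : Fin n → ℝ`. -/
noncomputable def esymm (n m : ℕ) (l : Fin n → ℝ) : ℝ :=
  ∑ s ∈ Finset.univ.powersetCard m, ∏ i ∈ s, l i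

/-- The Garding cone `Γ_m`: the connected component of `{λ | S_m(λ) > 0}`
containing the positive cone (equivalently, containing the all-ones vector). -/
noncomputable def GardingCone (n m : ℕ) : Set (Fin n → ℝ) :=
  connectedComponentIn {l | 0 < esymm n m l} (fun _ => 1)

open Finset Polynomial

lemma esymm_zero' (n : ℕ) (l : Fin n → ℝ) : esymm n 0 l = 1 := by
  simp [esymm]

lemma esymm_continuous (n p : ℕ) : Continuous fun l : Fin n → ℝ => esymm n p l := by
  unfold esymm
  exact continuous_finset_sum _ fun s _ => continuous_finset_prod _ fun i _ => continuous_apply i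

lemma esymm_one (n m : ℕ) : esymm n m (fun _ => 1) = n.choose m := by
  simp [esymm, card_powersetCard]

lemma card_superset (n m p : ℕ) (hpm : p ≤ m) (t : Finset (Fin n)) (ht : t.card = p) :
    (((univ : Finset (Fin n)).powersetCard m).filter (fun s => t ⊆ s)).card
      = (n - p).choose (m - p) := by
  have key : (((univ : Finset (Fin n)).powersetCard m).filter (fun s => t ⊆ s)).card
      = (((univ : Finset (Fin n)) \ t).powersetCard (m - p)).card := by
    apply Finset.card_nbij' (fun s => s \ t) (fun u => t ∪ u)
    · intro a ha
      rw [mem_coe, mem_filter, mem_powersetCard] at ha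
      obtain ⟨⟨_, hcard⟩, hts⟩ := ha
      rw [mem_coe, mem_powersetCard]
      refine ⟨sdiff_subset_sdiff (fun x _ => mem_univ x) Finset.Subset.rfl, by
        rw [card_sdiff_of_subset hts, hcard, ht]⟩
    · intro u hu
      rw [mem_coe, mem_powersetCard] at hu
      obtain ⟨hsub, hcard⟩ := hu
      have hdisj : Disjoint t u := disjoint_of_subset_right hsub disjoint_sdiff
      rw [mem_coe, mem_filter, mem_powersetCard]
      refine ⟨⟨subset_univ _, ?_⟩, subset_union_left⟩
      rw [card_union_of_disjoint hdisj, ht, hcard]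
      omega
    · intro a ha
      rw [mem_coe, mem_filter] at ha
      exact union_sdiff_of_subset ha.2
    · intro u hu
      rw [mem_coe, mem_powersetCard] at hu
      exact union_sdiff_cancel_left (disjoint_of_subset_right hu.1 disjoint_sdiff)
  rw [key, card_powersetCard, card_sdiff_of_subset (subset_univ t), card_univ, Fintype.card_fin, ht]

lemma esymm_affine (n m : ℕ) (hmn : m ≤ n) (a c : ℝ) (l : Fin n → ℝ) :
    esymm n m (fun i => a * l i + c) =
      ∑ p ∈ Finset.range (m + 1),
        (Nat.choose (n - p) (m - p) : ℝ) * a ^ p * c ^ (m - p) * esymm n p l := by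
  have step1 : esymm n m (fun i => a * l i + c)
      = ∑ s ∈ (univ : Finset (Fin n)).powersetCard m, ∑ t ∈ s.powerset,
          a ^ t.card * (∏ i ∈ t, l i) * c ^ (m - t.card) := by
    unfold esymm
    refine sum_congr rfl fun s hs => ?_
    rw [mem_powersetCard] at hs
    rw [prod_add]
    refine sum_congr rfl fun t ht => ?_
    rw [mem_powerset] at ht
    rw [prod_const, card_sdiff_of_subset ht, hs.2, prod_mul_distrib, prod_const]
  have step2 : (∑ s ∈ (univ : Finset (Fin n)).powersetCard m, ∑ t ∈ s.powerset,
          a ^ t.card * (∏ i ∈ t, l i) * c ^ (m - t.card))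
      = ∑ t ∈ (univ : Finset (Fin n)).powerset,
          ∑ _s ∈ ((univ.powersetCard m).filter fun s => t ⊆ s),
            a ^ t.card * (∏ i ∈ t, l i) * c ^ (m - t.card) := by
    apply sum_comm'
    intro s t
    simp only [mem_filter, mem_powerset, subset_univ, and_true]
  have step3 : esymm n m (fun i => a * l i + c)
      = ∑ t ∈ (univ : Finset (Fin n)).powerset,
          (((univ.powersetCard m).filter fun s => t ⊆ s)).card •
            (a ^ t.card * (∏ i ∈ t, l i) * c ^ (m - t.card)) := by
    rw [step1, step2]
    exact sum_congr rfl fun t _ => sum_const _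
  have step4 : esymm n m (fun i => a * l i + c)
      = ∑ p ∈ range (n + 1), ∑ t ∈ (univ : Finset (Fin n)).powerset with t.card = p,
          (((univ.powersetCard m).filter fun s => t ⊆ s)).card •
            (a ^ t.card * (∏ i ∈ t, l i) * c ^ (m - t.card)) := by
    rw [step3]
    refine (sum_fiberwise_of_maps_to (fun t _ => ?_) _).symm
    rw [mem_range, Nat.lt_succ_iff]
    exact (card_le_univ t).trans_eq (by simp)
  have step5 : ∀ p ∈ range (n + 1),
      (∑ t ∈ (univ : Finset (Fin n)).powerset with t.card = p,
          (((univ.powersetCard m).filter fun s => t ⊆ s)).card •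
            (a ^ t.card * (∏ i ∈ t, l i) * c ^ (m - t.card)))
      = if p ≤ m then ((n - p).choose (m - p) : ℝ) * a ^ p * c ^ (m - p) * esymm n p l
        else 0 := by
    intro p _
    have hset : (univ : Finset (Fin n)).powerset.filter (fun t => t.card = p)
        = univ.powersetCard p := powersetCard_eq_filter.symm
    rw [hset]
    by_cases hpm : p ≤ m
    · rw [if_pos hpm]
      calc (∑ t ∈ (univ : Finset (Fin n)).powersetCard p,
              (((univ.powersetCard m).filter fun s => t ⊆ s)).card •
                (a ^ t.card * (∏ i ∈ t, l i) * c ^ (m - t.card)))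
          = ∑ t ∈ (univ : Finset (Fin n)).powersetCard p,
              ((n - p).choose (m - p) : ℝ) * a ^ p * c ^ (m - p) * (∏ i ∈ t, l i) := by
            refine sum_congr rfl fun t ht => ?_
            rw [mem_powersetCard] at ht
            rw [card_superset n m p hpm t ht.2, nsmul_eq_mul, ht.2]
            ring
        _ = _ := by rw [esymm, ← mul_sum]
    · rw [if_neg hpm]
      refine sum_eq_zero fun t ht => ?_
      rw [mem_powersetCard] at ht
      have hempty : ((univ.powersetCard m).filter fun s => t ⊆ s) = ∅ := by
        refine filter_eq_empty_iff.mpr fun s hs hts => ?_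
        rw [mem_powersetCard] at hs
        have := card_le_card hts
        omega
      rw [hempty]
      simp
  rw [step4, sum_congr rfl step5]
  rw [← sum_subset (range_subset_range.mpr (by omega : m + 1 ≤ n + 1))
    (fun p _ hp => if_neg (by rw [mem_range] at hp; omega))]
  exact sum_congr rfl fun p hp => if_pos (by rw [mem_range] at hp; omega)

lemma prod_X_sub_C_coeff_pos : ∀ (t : Multiset ℝ), (∀ r ∈ t, r < 0) →
    (∀ j, 0 ≤ ((t.map fun r => X - C r).prod).coeff j) ∧
    ∀ j ≤ Multiset.card t, 0 < ((t.map fun r => X - C r).prod).coeff j := by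
  refine Multiset.induction ?_ ?_
  · intro _
    constructor
    · intro j
      rw [Multiset.map_zero, Multiset.prod_zero, coeff_one]
      split <;> norm_num
    · intro j hj
      simp only [Multiset.card_zero, Nat.le_zero] at hj
      subst hj
      simp
  · intro r t ih hrt
    have hr : r < 0 := hrt r (Multiset.mem_cons_self r t)
    obtain ⟨ih1, ih2⟩ := ih fun x hx => hrt x (Multiset.mem_cons_of_mem hx)
    set q := (t.map fun r => X - C r).prod with hq
    have hprod : ((r ::ₘ t).map fun r => X - C r).prod = q * (X - C r) := by
      rw [Multiset.map_cons, Multiset.prod_cons, mul_comm]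
    have hcoeff0 : (q * (X - C r)).coeff 0 = q.coeff 0 * (-r) := by
      rw [mul_coeff_zero]
      simp
    constructor
    · intro j
      rw [hprod]
      cases j with
      | zero =>
        rw [hcoeff0]
        have := ih1 0
        nlinarith
      | succ j =>
        rw [coeff_mul_X_sub_C]
        have h1 := ih1 j
        have h2 := ih1 (j + 1)
        nlinarith
    · intro j hj
      rw [hprod]
      cases j with
      | zero =>
        rw [hcoeff0]
        have := ih2 0 (Nat.zero_le _)
        nlinarith
      | succ j =>
        rw [coeff_mul_X_sub_C]
        rw [Multiset.card_cons] at hj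
        have h1 := ih2 j (by omega)
        have h2 := ih1 (j + 1)
        nlinarith

lemma esymm_pos_of_nonneg (n m : ℕ) (hm : 1 ≤ m) (hmn : m ≤ n) (l : Fin n → ℝ)
    (h0 : ∀ p ≤ m, 0 ≤ esymm n p l) (hsm : 0 < esymm n m l) :
    ∀ p ≤ m, 0 < esymm n p l := by
  set P : ℝ[X] := ∏ i : Fin n, (X + C (l i)) with hP
  have hcardu : #(univ : Finset (Fin n)) = n := by simp
  have coeffP : ∀ k ≤ n, P.coeff k = esymm n (n - k) l := by
    intro k hk
    rw [hP, Finset.prod_X_add_C_coeff _ _ (by rw [hcardu]; exact hk), hcardu]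
    rfl
  have hPmonic : P.Monic := monic_prod_of_monic _ _ fun i _ => monic_X_add_C _
  have hPdeg : P.natDegree = n := by
    rw [hP, natDegree_prod_of_monic _ _ fun i _ => monic_X_add_C _]
    simp
  have hPsplits : P.Splits := by
    rw [hP]
    refine Splits.prod fun i _ => ?_
    have : X + C (l i) = X - C (-(l i)) := by rw [map_neg, sub_neg_eq_add]
    rw [this]
    exact Splits.X_sub_C _
  have hProots : Multiset.card P.roots = n := by
    rw [← hPdeg]
    exact (splits_iff_card_roots.mp hPsplits)
  set Q : ℝ[X] := derivative^[n - m] P with hQ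
  have hQdeg_le : Q.natDegree ≤ m := by
    have := natDegree_iterate_derivative P (n - m)
    rw [hPdeg, ← hQ] at this
    omega
  have hQroots_ge : ∀ k, n ≤ Multiset.card (derivative^[k] P).roots + k := by
    intro k
    induction k with
    | zero => simp [hProots]
    | succ k ih =>
      have := Polynomial.card_roots_le_derivative (derivative^[k] P)
      rw [← Function.iterate_succ_apply' derivative k P, Nat.succ_eq_add_one] at this
      omega
  have hQroots : Multiset.card Q.roots = m := by
    have h1 := hQroots_ge (n - m)
    rw [← hQ] at h1
    have h2 := Q.card_roots'
    omega
  have hQdeg : Q.natDegree = m := le_antisymm hQdeg_le (hQroots ▸ Q.card_roots')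
  have hQsplits : Q.Splits := splits_iff_card_roots.mpr (by rw [hQroots, hQdeg])
  have coeffQ : ∀ j ≤ m, Q.coeff j
      = ((j + (n - m)).descFactorial (n - m) : ℝ) * esymm n (m - j) l := by
    intro j hj
    rw [hQ, Polynomial.coeff_iterate_derivative, nsmul_eq_mul,
      coeffP (j + (n - m)) (by omega)]
    congr 2
    omega
  have hdesc : ∀ j : ℕ, 0 < ((j + (n - m)).descFactorial (n - m) : ℝ) := by
    intro j
    have : 0 < (j + (n - m)).descFactorial (n - m) :=
      Nat.pos_of_ne_zero fun h => absurd (Nat.descFactorial_eq_zero_iff_lt.mp h) (by omega)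
    exact_mod_cast this
  have hcnonneg : ∀ j, 0 ≤ Q.coeff j := by
    intro j
    rcases le_or_gt j m with hjm | hjm
    · rw [coeffQ j hjm]
      exact mul_nonneg (hdesc j).le (h0 (m - j) (by omega))
    · rw [coeff_eq_zero_of_natDegree_lt (by omega)]
  have hc0 : 0 < Q.coeff 0 := by
    rw [coeffQ 0 (by omega)]
    exact mul_pos (hdesc 0) (by simpa using hsm)
  have hQne : Q ≠ 0 := fun h => by simp [h] at hc0
  have heval : ∀ x : ℝ, 0 ≤ x → 0 < Q.eval x := by
    intro x hx
    rw [Polynomial.eval_eq_sum_range]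
    refine Finset.sum_pos' (fun j _ => mul_nonneg (hcnonneg j) (pow_nonneg hx j)) ⟨0, ?_, ?_⟩
    · simp
    · simpa using hc0
  have hrootsneg : ∀ r ∈ Q.roots, r < 0 := by
    intro r hr
    by_contra hrn
    push_neg at hrn
    have := heval r hrn
    rw [(Polynomial.isRoot_of_mem_roots hr)] at this
    exact lt_irrefl 0 this
  have hfactor : Q = C Q.leadingCoeff * (Q.roots.map fun a => X - C a).prod :=
    hQsplits.eq_prod_roots
  have hlead : 0 < Q.leadingCoeff := by
    rw [Polynomial.leadingCoeff, hQdeg, coeffQ m le_rfl]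
    have : esymm n (m - m) l = 1 := by rw [Nat.sub_self, esymm_zero']
    rw [this, mul_one]
    exact hdesc m
  intro p hp
  have hQcoeff_pos : 0 < Q.coeff (m - p) := by
    rw [hfactor, coeff_C_mul]
    exact mul_pos hlead
      ((prod_X_sub_C_coeff_pos Q.roots hrootsneg).2 (m - p) (by rw [hQroots]; omega))
  rw [coeffQ (m - p) (by omega)] at hQcoeff_pos
  have hmp : m - (m - p) = p := by omega
  rw [hmp] at hQcoeff_pos
  nlinarith [hdesc (m - p), h0 p hp]

lemma gardingCone_subset (n m : ℕ) (hm : 1 ≤ m) (hmn : m ≤ n) :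
    GardingCone n m ⊆ {l : Fin n → ℝ | ∀ p ≤ m, 0 < esymm n p l} := by
  have hVopen : IsOpen {l : Fin n → ℝ | ∀ p ≤ m, 0 < esymm n p l} := by
    have : {l : Fin n → ℝ | ∀ p ≤ m, 0 < esymm n p l}
        = ⋂ p ∈ Set.Iic m, {l : Fin n → ℝ | 0 < esymm n p l} := by
      ext l
      simp [Set.mem_iInter]
    rw [this]
    exact (Set.finite_Iic m).isOpen_biInter fun p _ =>
      isOpen_lt continuous_const (esymm_continuous n p)
  have hWopen : IsOpen {l : Fin n → ℝ | ∃ p ≤ m, esymm n p l < 0} := by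
    have : {l : Fin n → ℝ | ∃ p ≤ m, esymm n p l < 0}
        = ⋃ p ∈ Set.Iic m, {l : Fin n → ℝ | esymm n p l < 0} := by
      ext l
      simp
    rw [this]
    exact isOpen_biUnion fun p _ => isOpen_lt (esymm_continuous n p) continuous_const
  have hdisj : Disjoint {l : Fin n → ℝ | ∀ p ≤ m, 0 < esymm n p l}
      {l : Fin n → ℝ | ∃ p ≤ m, esymm n p l < 0} := by
    rw [Set.disjoint_left]
    rintro l hlV ⟨p, hp, hneg⟩
    exact absurd (hlV p hp) (not_lt.mpr hneg.le)
  have hsub : GardingCone n m ⊆ {l : Fin n → ℝ | ∀ p ≤ m, 0 < esymm n p l}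
      ∪ {l : Fin n → ℝ | ∃ p ≤ m, esymm n p l < 0} := by
    intro l hlG
    have hlU : 0 < esymm n m l :=
      connectedComponentIn_subset {l : Fin n → ℝ | 0 < esymm n m l} (fun _ => 1) hlG
    by_cases hlW : l ∈ {l : Fin n → ℝ | ∃ p ≤ m, esymm n p l < 0}
    · exact Or.inr hlW
    · left
      refine esymm_pos_of_nonneg n m hm hmn l (fun p hp => ?_) hlU
      by_contra hneg
      exact hlW ⟨p, hp, by linarith⟩
  have hone_mem : (fun _ => (1 : ℝ)) ∈ {l : Fin n → ℝ | 0 < esymm n m l} := by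
    show 0 < esymm n m (fun _ => 1)
    rw [esymm_one]
    exact_mod_cast Nat.choose_pos hmn
  have hone : (fun _ => (1 : ℝ)) ∈ GardingCone n m := mem_connectedComponentIn hone_mem
  have honeV : (fun _ => (1 : ℝ)) ∈ {l : Fin n → ℝ | ∀ p ≤ m, 0 < esymm n p l} := by
    intro p hp
    rw [esymm_one]
    exact_mod_cast Nat.choose_pos (hp.trans hmn)
  exact isPreconnected_connectedComponentIn.subset_left_of_subset_union hVopen hWopen hdisj hsub
    ⟨_, hone, honeV⟩

theorem stmt12 (n m : ℕ) (hm : 1 ≤ m) (hmn : m ≤ n) (l : Fin n → ℝ)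
    (hl : l ∈ GardingCone n m) (μ : ℝ) (hμ : 0 < μ) (s : ℝ)
    (hs : s ∈ Set.Icc (0 : ℝ) 1) :
    esymm n m (fun i => (1 - s) * l i + s * μ) =
      ∑ p ∈ Finset.range (m + 1),
        (Nat.choose (n - p) (m - p) : ℝ) * (1 - s) ^ p * (μ * s) ^ (m - p) * esymm n p l ∧
    0 < esymm n m (fun i => (1 - s) * l i + s * μ) ∧
    (fun i => (1 - s) * l i + s * μ) ∈ GardingCone n m := by
  obtain ⟨hs0, hs1⟩ := hs
  have hV : ∀ p ≤ m, 0 < esymm n p l := gardingCone_subset n m hm hmn hl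
  have key : ∀ σ : ℝ, 0 ≤ σ → σ ≤ 1 →
      0 < esymm n m (fun i => (1 - σ) * l i + σ * μ) := by
    intro σ h0 h1
    rw [esymm_affine n m hmn (1 - σ) (σ * μ) l]
    have hnonneg : ∀ p ∈ range (m + 1),
        0 ≤ ((n - p).choose (m - p) : ℝ) * (1 - σ) ^ p * (σ * μ) ^ (m - p) * esymm n p l := by
      intro p hp
      rw [mem_range] at hp
      exact mul_nonneg (mul_nonneg (mul_nonneg (Nat.cast_nonneg _)
        (pow_nonneg (by linarith) p)) (pow_nonneg (mul_nonneg h0 hμ.le) _))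
        (hV p (by omega)).le
    rcases lt_or_eq_of_le h1 with hlt | heq
    · refine Finset.sum_pos' hnonneg ⟨m, mem_range.mpr (by omega), ?_⟩
      rw [Nat.sub_self, pow_zero, Nat.choose_zero_right, Nat.cast_one, one_mul, mul_one]
      exact mul_pos (pow_pos (by linarith) m) (hV m le_rfl)
    · subst heq
      refine Finset.sum_pos' hnonneg ⟨0, mem_range.mpr (by omega), ?_⟩
      rw [Nat.sub_zero, Nat.sub_zero, pow_zero, esymm_zero', mul_one, mul_one, one_mul]
      exact mul_pos (by exact_mod_cast Nat.choose_pos hmn) (pow_pos hμ m)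
  refine ⟨?_, key s hs0 hs1, ?_⟩
  · rw [esymm_affine n m hmn (1 - s) (s * μ) l]
    exact Finset.sum_congr rfl fun p _ => by rw [mul_comm μ s]
  · have hcont : Continuous fun σ : ℝ => (fun i => (1 - σ) * l i + σ * μ : Fin n → ℝ) := by
      refine continuous_pi fun i => ?_
      fun_prop
    have hKpre : IsPreconnected
        ((fun σ : ℝ => (fun i => (1 - σ) * l i + σ * μ : Fin n → ℝ)) '' Set.Icc 0 s) :=
      isPreconnected_Icc.image _ hcont.continuousOn
    have hKU : ((fun σ : ℝ => (fun i => (1 - σ) * l i + σ * μ : Fin n → ℝ)) '' Set.Icc 0 s)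
        ⊆ {l : Fin n → ℝ | 0 < esymm n m l} := by
      rintro _ ⟨σ, hσ, rfl⟩
      exact key σ hσ.1 (hσ.2.trans hs1)
    have hlK : l ∈ (fun σ : ℝ => (fun i => (1 - σ) * l i + σ * μ : Fin n → ℝ)) '' Set.Icc 0 s :=
      ⟨0, ⟨le_rfl, hs0⟩, by funext i; simp⟩
    have hKsub := hKpre.subset_connectedComponentIn hlK hKU
    have heq : GardingCone n m
        = connectedComponentIn {l : Fin n → ℝ | 0 < esymm n m l} l :=
      connectedComponentIn_eq hl
    rw [heq]
    exact hKsub ⟨s, ⟨hs0, le_rfl⟩, rfl⟩
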